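/- Let n ≥ 0 be even and let P be a graded poset of (odd) rank n+1. Then μ(Rees(P, C_{n+1})) is an even integer, where C_{n+1} is the chain with n+1 elements of ranks 0,…,n. -/

import Mathlib

/-- The proper part of the Rees product of a graded poset `(α, rk)` of rank `n+1`
with the `(n+1)`-element chain `C_{n+1}`: pairs `(p, q)` with `p ≠ ⊥`, `0 ≤ q ≤ n`,
and `q ≤ rk p - 1`. -/
def ReesCElt (α : Type) [PartialOrder α] [OrderBot α] (rk : α → ℕ) (n : ℕ) : Type :=
  {pq : α × ℕ // pq.1 ≠ ⊥ ∧ pq.2 ≤ n ∧ pq.2 + 1 ≤ rk pq.1}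

/-- The Rees order: `(p,q) ≤ (p',q')` iff `p ≤ p'`, `q ≤ q'`, and
`rk p' - rk p ≥ q' - q`. -/
instance (α : Type) [PartialOrder α] [OrderBot α] (rk : α → ℕ) (n : ℕ) :
    PartialOrder (ReesCElt α rk n) where
  le a b := a.1.1 ≤ b.1.1 ∧ a.1.2 ≤ b.1.2 ∧ rk a.1.1 + b.1.2 ≤ rk b.1.1 + a.1.2
  le_refl a := ⟨le_refl _, le_refl _, le_refl _⟩
  le_trans a b c hab hbc :=
    ⟨hab.1.trans hbc.1, hab.2.1.trans hbc.2.1, by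
      have h1 := hab.2.2; have h2 := hbc.2.2; omega⟩
  le_antisymm a b hab hba := by
    apply Subtype.ext
    exact Prod.ext (le_antisymm hab.1 hba.1) (le_antisymm hab.2.1 hba.2.1)

/-- The Rees product `Rees(P, C_{n+1})`: the proper part together with an adjoined
minimum `⊥` and maximum `⊤`. -/
abbrev ReesChain (α : Type) [PartialOrder α] [OrderBot α] (rk : α → ℕ) (n : ℕ) : Type :=
  WithBot (WithTop (ReesCElt α rk n))

section Aux

variable {α : Type} [PartialOrder α] [OrderBot α] {rk : α → ℕ} {n : ℕ}

lemma ReesCElt.le_def (a b : ReesCElt α rk n) :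
    a ≤ b ↔ a.1.1 ≤ b.1.1 ∧ a.1.2 ≤ b.1.2 ∧ rk a.1.1 + b.1.2 ≤ rk b.1.1 + a.1.2 :=
  Iff.rfl

/-- The flip automorphism `(p, q) ↦ (p, rk p - 1 - q)` of the proper part. -/
def reesFlip (rk : α → ℕ) (n : ℕ) (hle : ∀ p : α, rk p ≤ n + 1) :
    ReesCElt α rk n ≃o ReesCElt α rk n where
  toFun a := ⟨(a.1.1, rk a.1.1 - 1 - a.1.2),
    a.2.1,
    (by have h1 := a.2.2.1; have h2 := a.2.2.2; have h3 := hle a.1.1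
        show rk a.1.1 - 1 - a.1.2 ≤ n; omega),
    (by have h2 := a.2.2.2
        show rk a.1.1 - 1 - a.1.2 + 1 ≤ rk a.1.1; omega)⟩
  invFun a := ⟨(a.1.1, rk a.1.1 - 1 - a.1.2),
    a.2.1,
    (by have h1 := a.2.2.1; have h2 := a.2.2.2; have h3 := hle a.1.1
        show rk a.1.1 - 1 - a.1.2 ≤ n; omega),
    (by have h2 := a.2.2.2
        show rk a.1.1 - 1 - a.1.2 + 1 ≤ rk a.1.1; omega)⟩
  left_inv a := by
    have h2 := a.2.2.2
    apply Subtype.ext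
    show (a.1.1, rk a.1.1 - 1 - (rk a.1.1 - 1 - a.1.2)) = a.1
    rw [Prod.ext_iff]
    exact ⟨rfl, by show rk a.1.1 - 1 - (rk a.1.1 - 1 - a.1.2) = a.1.2; omega⟩
  right_inv a := by
    have h2 := a.2.2.2
    apply Subtype.ext
    show (a.1.1, rk a.1.1 - 1 - (rk a.1.1 - 1 - a.1.2)) = a.1
    rw [Prod.ext_iff]
    exact ⟨rfl, by show rk a.1.1 - 1 - (rk a.1.1 - 1 - a.1.2) = a.1.2; omega⟩
  map_rel_iff' := by
    intro a b
    have ha := a.2.2.2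
    have hb := b.2.2.2
    rw [ReesCElt.le_def, ReesCElt.le_def]
    show (a.1.1 ≤ b.1.1 ∧ rk a.1.1 - 1 - a.1.2 ≤ rk b.1.1 - 1 - b.1.2 ∧
      rk a.1.1 + (rk b.1.1 - 1 - b.1.2) ≤ rk b.1.1 + (rk a.1.1 - 1 - a.1.2)) ↔
      (a.1.1 ≤ b.1.1 ∧ a.1.2 ≤ b.1.2 ∧ rk a.1.1 + b.1.2 ≤ rk b.1.1 + a.1.2)
    constructor
    · rintro ⟨h1, h2, h3⟩
      exact ⟨h1, by omega, by omega⟩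
    · rintro ⟨h1, h2, h3⟩
      exact ⟨h1, by omega, by omega⟩

lemma reesFlip_apply (hle : ∀ p : α, rk p ≤ n + 1) (a : ReesCElt α rk n) :
    (reesFlip rk n hle a).1 = (a.1.1, rk a.1.1 - 1 - a.1.2) := rfl

lemma reesFlip_fixed_iff (hle : ∀ p : α, rk p ≤ n + 1) (a : ReesCElt α rk n) :
    reesFlip rk n hle a = a ↔ rk a.1.1 = 2 * a.1.2 + 1 := by
  have h2 := a.2.2.2
  constructor
  · intro h
    have h3 := congrArg (fun x : ReesCElt α rk n => x.1.2) h
    simp only [reesFlip_apply] at h3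
    omega
  · intro h
    apply Subtype.ext
    rw [reesFlip_apply, Prod.ext_iff]
    exact ⟨rfl, by show rk a.1.1 - 1 - a.1.2 = a.1.2; omega⟩

lemma reesFlip_involutive (hle : ∀ p : α, rk p ≤ n + 1) (a : ReesCElt α rk n) :
    reesFlip rk n hle (reesFlip rk n hle a) = a :=
  (reesFlip rk n hle).left_inv a

end Aux

theorem statement8 (n : ℕ) (hn : Even n)
    (α : Type) [Fintype α] [PartialOrder α] [BoundedOrder α]
    (rk : α → ℕ) (hbot : rk ⊥ = 0) (htop : rk ⊤ = n + 1)
    (hcov : ∀ x y : α, x ⋖ y → rk y = rk x + 1)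
    (mu : ReesChain α rk n → ReesChain α rk n → ℤ)
    (hmu_refl : ∀ x, mu x x = 1)
    (hmu_rec : ∀ x y : ReesChain α rk n, x < y → ∑ᶠ z ∈ Set.Icc x y, mu x z = 0) :
    Even (mu ⊥ ⊤) := by
  classical
  -- basic rank facts
  have hrk_lt : ∀ p q : α, p < q → rk p < rk q := by
    intro p q
    induction q using WellFoundedLT.induction with
    | _ q IH =>
      intro hpq
      obtain ⟨x, hpx, hxq⟩ := exists_le_covBy_of_lt hpq
      rcases eq_or_lt_of_le hpx with rfl | hlt
      · rw [hcov _ _ hxq]; omega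
      · have h1 := IH x hxq.lt hlt
        rw [hcov _ _ hxq]; omega
  have hle : ∀ p : α, rk p ≤ n + 1 := by
    intro p
    rcases eq_or_lt_of_le (le_top (a := p)) with rfl | h
    · omega
    · have := hrk_lt _ _ h; omega
  -- finiteness
  haveI hfβ : Fintype (ReesCElt α rk n) := Fintype.ofInjective
    (fun a : ReesCElt α rk n =>
      ((a.1.1, ⟨a.1.2, Nat.lt_succ_of_le a.2.2.1⟩) : α × Fin (n + 1)))
    (by
      intro a b hab
      apply Subtype.ext
      have h1 := congrArg (fun x : α × Fin (n + 1) => x.1) hab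
      have h2 := congrArg (fun x : α × Fin (n + 1) => (x.2 : ℕ)) hab
      simp only at h1 h2
      exact Prod.ext h1 h2)
  haveI hfR : Fintype (ReesChain α rk n) :=
    show Fintype (Option (Option (ReesCElt α rk n))) from inferInstance
  -- the flip automorphism, extended to the bounded poset
  set e : ReesCElt α rk n ≃o ReesCElt α rk n := reesFlip rk n hle with he
  set Φ : ReesChain α rk n ≃o ReesChain α rk n := e.withTopCongr.withBotCongr with hΦ
  have hΦbot : Φ ⊥ = ⊥ := by simp [hΦ]
  have hΦtop : Φ ⊤ = ⊤ := by simp [hΦ]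
  have hΦcoe : ∀ x : ReesCElt α rk n,
      Φ ((x : WithTop (ReesCElt α rk n)) : ReesChain α rk n)
        = ((e x : WithTop (ReesCElt α rk n)) : ReesChain α rk n) := by
    intro x
    simp only [hΦ, OrderIso.withBotCongr_apply]
    show Option.map _ (Option.some _) = Option.some _
    rw [Option.map_some]
    congr 1
  have hΦΦ : ∀ z : ReesChain α rk n, Φ (Φ z) = z := by
    intro z
    induction z using WithBot.recBotCoe with
    | bot => rw [hΦbot, hΦbot]
    | coe y =>
      induction y using WithTop.recTopCoe with
      | top => show Φ (Φ ⊤) = ⊤; rw [hΦtop, hΦtop]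
      | coe x =>
        show Φ (Φ _) = ((x : WithTop (ReesCElt α rk n)) : ReesChain α rk n)
        rw [hΦcoe, hΦcoe, he, reesFlip_involutive]
  have hΦne_bot : ∀ z : ReesChain α rk n, z ≠ ⊥ → Φ z ≠ ⊥ := by
    intro z hz h
    exact hz (Φ.injective (h.trans hΦbot.symm))
  -- mu mod 2
  set M : ReesChain α rk n → ZMod 2 := fun z => ((mu ⊥ z : ℤ) : ZMod 2) with hM
  set T : ReesChain α rk n → Finset (ReesChain α rk n) :=
    fun y => (Set.toFinite (Set.Icc (⊥ : ReesChain α rk n) y)).toFinset with hT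
  have hmemT : ∀ y z : ReesChain α rk n, z ∈ T y ↔ z ≤ y := by
    intro y z
    simp [hT, Set.Finite.mem_toFinset]
  have L1 : ∀ y : ReesChain α rk n, ⊥ < y → ∑ z ∈ T y, M z = 0 := by
    intro y hy
    have h := hmu_rec ⊥ y hy
    rw [finsum_mem_eq_finite_toFinset_sum _ (Set.toFinite _)] at h
    have h2 := congrArg (fun t : ℤ => ((t : ZMod 2))) h
    push_cast at h2
    simpa [hM, hT] using h2
  have hMbot : M ⊥ = 1 := by
    show ((mu ⊥ ⊥ : ℤ) : ZMod 2) = 1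
    rw [hmu_refl]
    exact Int.cast_one
  -- symmetry of mu under Φ
  have L2 : ∀ z : ReesChain α rk n, M (Φ z) = M z := by
    intro z
    induction z using WellFoundedLT.induction with
    | _ z IH =>
      rcases eq_or_lt_of_le (bot_le (a := z)) with rfl | hz
      · rw [hΦbot]
      · have hΦz : ⊥ < Φ z :=
          lt_of_le_of_ne bot_le (Ne.symm (hΦne_bot z (ne_of_gt hz)))
        have h1 := L1 z hz
        have h2 := L1 (Φ z) hΦz
        have h3 : ∑ w ∈ T (Φ z), M w = ∑ w ∈ T z, M (Φ w) := by
          refine Finset.sum_nbij' (fun w => Φ.symm w) (fun w => Φ w) ?_ ?_ ?_ ?_ ?_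
          · intro w hw
            rw [hmemT] at hw ⊢
            have h4 := Φ.symm.monotone hw
            rwa [show Φ.symm (Φ z) = z from Φ.left_inv z] at h4
          · intro w hw
            rw [hmemT] at hw ⊢
            exact Φ.monotone hw
          · intro w _; exact Φ.right_inv w
          · intro w _; exact Φ.left_inv w
          · intro w _
            rw [show Φ (Φ.symm w) = w from Φ.right_inv w]
        rw [h3] at h2
        have h4 : ∑ w ∈ T z, (M (Φ w) - M w) = 0 := by
          rw [Finset.sum_sub_distrib, h2, h1, sub_zero]
        have h5 : ∑ w ∈ T z, (M (Φ w) - M w) = M (Φ z) - M z := by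
          refine Finset.sum_eq_single_of_mem z ((hmemT z z).2 le_rfl) ?_
          intro w hw hne
          rw [hmemT] at hw
          rw [IH w (lt_of_le_of_ne hw hne), sub_self]
        rw [h5] at h4
        exact sub_eq_zero.mp h4
  -- fixed-point recursion
  have L3 : ∀ z : ReesChain α rk n, ⊥ < z → Φ z = z →
      ∑ w ∈ ((((T z).erase z).erase ⊥).filter (fun w => Φ w = w)), M w = 1 + M z := by
    intro z hz hfix
    have h1 := L1 z hz
    have hzT : z ∈ T z := (hmemT z z).2 le_rfl
    have hbT : (⊥ : ReesChain α rk n) ∈ (T z).erase z :=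
      Finset.mem_erase.mpr ⟨ne_of_lt hz, (hmemT z ⊥).2 bot_le⟩
    have hsplit : ∑ w ∈ T z, M w
        = M z + (M ⊥ + ∑ w ∈ ((T z).erase z).erase ⊥, M w) := by
      rw [Finset.add_sum_erase _ _ hbT, Finset.add_sum_erase _ _ hzT]
    have hclosed : ∀ w ∈ ((T z).erase z).erase ⊥, Φ w ∈ ((T z).erase z).erase ⊥ := by
      intro w hw
      rw [Finset.mem_erase, Finset.mem_erase, hmemT] at hw ⊢
      obtain ⟨hwb, hwz, hwle⟩ := hw
      refine ⟨hΦne_bot w hwb, fun hc => hwz (Φ.injective (hc.trans hfix.symm)), ?_⟩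
      calc Φ w ≤ Φ z := Φ.monotone hwle
        _ = z := hfix
    have hpair : ∑ w ∈ (((T z).erase z).erase ⊥).filter (fun w => ¬ Φ w = w), M w = 0 := by
      apply Finset.sum_involution (fun w _ => Φ w)
      · intro w _
        rw [L2 w]
        exact CharTwo.add_self_eq_zero _
      · intro w hw _
        exact (Finset.mem_filter.mp hw).2
      · intro w hw
        rw [Finset.mem_filter] at hw ⊢
        refine ⟨hclosed w hw.1, fun hc => hw.2 ?_⟩
        rw [hΦΦ w] at hc
        exact hc.symm
      · intro w _; exact hΦΦ w
    have hsfilter : ∑ w ∈ ((T z).erase z).erase ⊥, M w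
        = ∑ w ∈ (((T z).erase z).erase ⊥).filter (fun w => Φ w = w), M w := by
      rw [← Finset.sum_filter_add_sum_filter_not (((T z).erase z).erase ⊥)
        (fun w => Φ w = w), hpair, add_zero]
    rw [hsplit, hMbot, hsfilter] at h1
    -- h1 : M z + (1 + S) = 0, want S = 1 + M z (char 2)
    have h6 : ∑ w ∈ (((T z).erase z).erase ⊥).filter (fun w => Φ w = w), M w
        = -(M z + 1) := by
      apply eq_neg_of_add_eq_zero_right
      calc M z + 1 + ∑ w ∈ (((T z).erase z).erase ⊥).filter (fun w => Φ w = w), M w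
          = M z + (1 + ∑ w ∈ (((T z).erase z).erase ⊥).filter (fun w => Φ w = w), M w) := by
            ring
        _ = 0 := h1
    rw [h6, neg_eq_iff_add_eq_zero]
    calc M z + 1 + (1 + M z) = (M z + 1) + (M z + 1) := by ring
      _ = 0 := CharTwo.add_self_eq_zero _
  -- the top fixed element t = (⊤, n/2)
  obtain ⟨k, hk⟩ := hn
  have hk2 : 2 * (n / 2) = n := by omega
  have htb : (⊤ : α) ≠ ⊥ := by
    intro h
    rw [h, hbot] at htop
    omega
  set t : ReesCElt α rk n := ⟨((⊤ : α), n / 2), htb, Nat.div_le_self n 2,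
    by rw [htop]; omega⟩ with ht
  have heT : e t = t := by
    rw [he, reesFlip_fixed_iff]
    show rk (⊤ : α) = 2 * (n / 2) + 1
    rw [htop]; omega
  set tc : ReesChain α rk n :=
    ((t : WithTop (ReesCElt α rk n)) : ReesChain α rk n) with htc
  have htc_fix : Φ tc = tc := by rw [htc, hΦcoe, heT]
  have htc_ne_bot : tc ≠ ⊥ := WithBot.coe_ne_bot
  have htc_ne_top : tc ≠ ⊤ := by
    intro h
    rw [show (⊤ : ReesChain α rk n)
      = ((⊤ : WithTop (ReesCElt α rk n)) : ReesChain α rk n) from rfl] at h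
    exact WithTop.coe_ne_top (WithBot.coe_injective h)
  have hbot_lt_tc : (⊥ : ReesChain α rk n) < tc :=
    lt_of_le_of_ne bot_le (Ne.symm htc_ne_bot)
  have htc_lt_top : tc < ⊤ := lt_of_le_of_ne le_top htc_ne_top
  -- all proper fixed points are ≤ tc
  have hmax : ∀ z : ReesChain α rk n, z ≠ ⊥ → z ≠ ⊤ → Φ z = z → z ≤ tc := by
    intro z
    induction z using WithBot.recBotCoe with
    | bot => intro hzb _ _; exact absurd rfl hzb
    | coe y =>
      induction y using WithTop.recTopCoe with
      | top => intro _ hzt _; exact absurd rfl hzt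
      | coe x =>
        intro _ _ hfix
        rw [hΦcoe] at hfix
        have hex : e x = x := WithTop.coe_injective (WithBot.coe_injective hfix)
        have hrk : rk x.1.1 = 2 * x.1.2 + 1 := by
          rw [he, reesFlip_fixed_iff] at hex
          exact hex
        have hxle : x ≤ t := by
          rw [ReesCElt.le_def]
          have h5 := hle x.1.1
          refine ⟨le_top, ?_, ?_⟩
          · show x.1.2 ≤ n / 2
            omega
          · show rk x.1.1 + n / 2 ≤ rk (⊤ : α) + x.1.2
            rw [htop]; omega
        exact WithBot.coe_le_coe.mpr (WithTop.coe_le_coe.mpr hxle)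
  -- assemble
  have hbot_lt_top : (⊥ : ReesChain α rk n) < ⊤ := hbot_lt_tc.trans htc_lt_top
  have hA := L3 ⊤ hbot_lt_top hΦtop
  have hB := L3 tc hbot_lt_tc htc_fix
  have htcA : tc ∈ (((T ⊤).erase ⊤).erase ⊥).filter (fun w => Φ w = w) := by
    rw [Finset.mem_filter, Finset.mem_erase, Finset.mem_erase, hmemT]
    exact ⟨⟨htc_ne_bot, htc_ne_top, le_top⟩, htc_fix⟩
  have hAB : ((((T ⊤).erase ⊤).erase ⊥).filter (fun w => Φ w = w)).erase tc
      = (((T tc).erase tc).erase ⊥).filter (fun w => Φ w = w) := by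
    ext z
    rw [Finset.mem_erase, Finset.mem_filter, Finset.mem_erase, Finset.mem_erase,
      Finset.mem_filter, Finset.mem_erase, Finset.mem_erase, hmemT, hmemT]
    constructor
    · rintro ⟨hztc, ⟨hzb, hzt, -⟩, hzfix⟩
      exact ⟨⟨hzb, hztc, hmax z hzb hzt hzfix⟩, hzfix⟩
    · rintro ⟨⟨hzb, hztc, hzle⟩, hzfix⟩
      refine ⟨hztc, ⟨hzb, ?_, le_top⟩, hzfix⟩
      intro h
      rw [h] at hzle
      exact htc_ne_top (le_antisymm hzle le_top).symm
  have hsum : ∑ w ∈ (((T ⊤).erase ⊤).erase ⊥).filter (fun w => Φ w = w), M w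
      = M tc + ∑ w ∈ ((((T ⊤).erase ⊤).erase ⊥).filter (fun w => Φ w = w)).erase tc, M w :=
    (Finset.add_sum_erase _ _ htcA).symm
  rw [hAB, hB, hA] at hsum
  -- hsum : 1 + M ⊤ = M tc + (1 + M tc)
  have hMtop : M ⊤ = 0 := by
    have h7 : M tc + (1 + M tc) = 1 + 0 := by
      calc M tc + (1 + M tc) = (M tc + M tc) + 1 := by ring
        _ = 0 + 1 := by rw [CharTwo.add_self_eq_zero]
        _ = 1 + 0 := by ring
    rw [h7] at hsum
    exact add_left_cancel hsum
  have h8 : ((mu ⊥ ⊤ : ℤ) : ZMod 2) = 0 := hMtop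
  rw [ZMod.intCast_zmod_eq_zero_iff_dvd] at h8
  obtain ⟨c, hc⟩ := h8
  exact ⟨c, by push_cast at hc; omega⟩
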